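/- arXiv:1308.4822 — 3 statements merged into one kernel-verified Lean document; each statement's English description precedes it below -/
import Mathlib

section
/- Let L be a bounded lattice. Then (i) every φ ∈ MPM(D̄(L),2_τ) is of the form ē_a for some a ∈ L, and (ii) the map a ↦ ē_a is an order-isomorphism from L onto MPM(D̄(L),2_τ) ordered by φ ≤ ψ iff φ⁻¹(1) ⊆ ψ⁻¹(1); in particular, a ↦ ē_a is a bijection of L onto MPM(D̄(L),2_τ), and a ≤ b in L if and only if ē_a⁻¹(1) ⊆ ē_b⁻¹(1). -/
namespace CanExt

open Classical

/-- A partial map from `X` into the two-element chain `{0,1}` (encoded as `Bool`,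
with `false` playing the role of `0` and `true` the role of `1`);
`φ x = none` means `x` is outside the domain of `φ`. -/
abbrev PMap (X : Type*) := X → Option Bool

/-- The preimage of `1` of a partial map. -/
def pre1 {X : Type*} (φ : PMap X) : Set X := {x | φ x = some true}

/-- The preimage of `0` of a partial map. -/
def pre0 {X : Type*} (φ : PMap X) : Set X := {x | φ x = some false}

/-- A partial map is `E`-preserving if whenever `x, y` lie in its domain and
`(x,y) ∈ E`, then `φ x ≤ φ y`. -/
def EPres {X : Type*} (E : X → X → Prop) (φ : PMap X) : Prop :=
  ∀ ⦃x y : X⦄, E x y → ∀ ⦃a b : Bool⦄, φ x = some a → φ y = some b → a ≤ b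

/-- `PExt ψ φ` : the partial map `ψ` extends the partial map `φ`. -/
def PExt {X : Type*} (ψ φ : PMap X) : Prop :=
  ∀ ⦃x : X⦄ ⦃a : Bool⦄, φ x = some a → ψ x = some a

/-- The set of maximal partial `E`-preserving maps from `(X,E)` into the
two-element chain `2`. -/
def MPE {X : Type*} (E : X → X → Prop) : Set (PMap X) :=
  {φ | EPres E φ ∧ ∀ ψ : PMap X, EPres E ψ → PExt ψ φ → ψ = φ}

/-- A partial morphism from a graph with topology `(X,E,t)` to `2_τ`:
the preimages of `1` and `0` are `t`-closed (equivalently, the domain is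
closed and the restriction to the domain is continuous into discrete `2`),
and the map is `E`-preserving. -/
def PMorphT {X : Type*} (E : X → X → Prop) (t : TopologicalSpace X) (φ : PMap X) : Prop :=
  EPres E φ ∧ @IsClosed X t (pre1 φ) ∧ @IsClosed X t (pre0 φ)

/-- The set of maximal partial morphisms from `(X,E,t)` to `2_τ`. -/
def MPM {X : Type*} (E : X → X → Prop) (t : TopologicalSpace X) : Set (PMap X) :=
  {φ | PMorphT E t φ ∧ ∀ ψ : PMap X, PMorphT E t ψ → PExt ψ φ → ψ = φ}

/-- The relation `E` between partial maps on a lattice `L`: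
`(f,g) ∈ E` iff `f x ≤ g x` for all `x ∈ dom f ∩ dom g`. -/
def ErelP {L : Type*} (f g : PMap L) : Prop :=
  ∀ ⦃x : L⦄ ⦃a b : Bool⦄, f x = some a → g x = some b → a ≤ b

/-- `f ≤₁ g` iff `f⁻¹(1) ⊆ g⁻¹(1)`. -/
def le1 {L : Type*} (f g : PMap L) : Prop := pre1 f ⊆ pre1 g

/-- `f ≤₂ g` iff `f⁻¹(0) ⊆ g⁻¹(0)`. -/
def le2 {L : Type*} (f g : PMap L) : Prop := pre0 f ⊆ pre0 g

section Lat

variable (L : Type*) [Lattice L] [BoundedOrder L]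

/-- A partial homomorphism from a bounded lattice `L` to the two-element
bounded lattice `2_B`: its domain is a `{0,1}`-sublattice of `L` and the
restriction to the domain is a bounded-lattice homomorphism. -/
def PHom (f : PMap L) : Prop :=
  f ⊥ = some false ∧ f ⊤ = some true ∧
  ∀ ⦃a b : L⦄ ⦃x y : Bool⦄, f a = some x → f b = some y →
    f (a ⊓ b) = some (x ⊓ y) ∧ f (a ⊔ b) = some (x ⊔ y)

/-- The set of maximal partial homomorphisms (MPHs) from `L` to `2_B`. -/
def MPHset : Set (PMap L) := {f | PHom L f ∧ ∀ g : PMap L, PHom L g → PExt g f → g = f}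

/-- The underlying set of the graph `D♭(L)`. -/
abbrev MPHsub := {f : PMap L // f ∈ MPHset L}

/-- The relation `E` on `MPH(L, 2_B)`, giving the graph `D♭(L)`. -/
def EM (f g : MPHsub L) : Prop := ErelP f.1 g.1

/-- The evaluation map `e_a` on `MPH(L,2_B)` : `e_a(f) = f(a)` if `a ∈ dom f`. -/
def evalM (a : L) : PMap (MPHsub L) := fun f => f.1 a

/-- `V_a = {f ∈ MPH(L,2_B) : f(a) = 0}`. -/
def VaM (a : L) : Set (MPHsub L) := {f | f.1 a = some false}

/-- `W_a = {f ∈ MPH(L,2_B) : f(a) = 1}`. -/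
def WaM (a : L) : Set (MPHsub L) := {f | f.1 a = some true}

/-- The topology on `MPH(L,2_B)` with the sets `V_a`, `W_a` as a subbasis of
closed sets. -/
def tauM : TopologicalSpace (MPHsub L) :=
  TopologicalSpace.generateFrom {U | ∃ a : L, U = (VaM L a)ᶜ ∨ U = (WaM L a)ᶜ}

/-- A (nonempty) lattice filter. -/
def IsLatFilter (F : Set L) : Prop :=
  F.Nonempty ∧ (∀ ⦃a b : L⦄, a ∈ F → a ≤ b → b ∈ F) ∧
    (∀ ⦃a b : L⦄, a ∈ F → b ∈ F → a ⊓ b ∈ F)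

/-- A (nonempty) lattice ideal. -/
def IsLatIdeal (I : Set L) : Prop :=
  I.Nonempty ∧ (∀ ⦃a b : L⦄, a ∈ I → b ≤ a → b ∈ I) ∧
    (∀ ⦃a b : L⦄, a ∈ I → b ∈ I → a ⊔ b ∈ I)

/-- The set of special partial homomorphisms (SPHs) from `L` to `2_B`:
`f⁻¹(1)` is a nonempty filter, `f⁻¹(0)` is a nonempty ideal, and they are
disjoint. -/
def SPHset : Set (PMap L) :=
  {f | IsLatFilter L (pre1 f) ∧ IsLatIdeal L (pre0 f) ∧ Disjoint (pre1 f) (pre0 f)}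

/-- The underlying set of the graph `D̄♭(L)`. -/
abbrev SPHsub := {f : PMap L // f ∈ SPHset L}

/-- The relation `E` on `SPH(L, 2_B)`, giving the graph `D̄♭(L)`. -/
def ES (f g : SPHsub L) : Prop := ErelP f.1 g.1

/-- The evaluation map `ē_a` on `SPH(L,2_B)`. -/
def evalS (a : L) : PMap (SPHsub L) := fun f => f.1 a

/-- `V_a = {f ∈ SPH(L,2_B) : f(a) = 0}`. -/
def VaS (a : L) : Set (SPHsub L) := {f | f.1 a = some false}

/-- `W_a = {f ∈ SPH(L,2_B) : f(a) = 1}`. -/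
def WaS (a : L) : Set (SPHsub L) := {f | f.1 a = some true}

/-- The topology on `SPH(L,2_B)` with the sets `V_a`, `W_a` as a subbasis of
closed sets. -/
def tauS : TopologicalSpace (SPHsub L) :=
  TopologicalSpace.generateFrom {U | ∃ a : L, U = (VaS L a)ᶜ ∨ U = (WaS L a)ᶜ}

/-- The carrier of the completion built from `D♭(L)`. -/
abbrev CX := {φ : PMap (MPHsub L) // φ ∈ MPE (EM L)}

/-- The carrier of the completion built from `D̄♭(L)`. -/
abbrev CY := {φ : PMap (SPHsub L) // φ ∈ MPE (ES L)}

end Lat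

section Helpers
set_option linter.unusedSectionVars false
set_option linter.unusedVariables false

variable {L : Type*} [Lattice L] [BoundedOrder L]

attribute [local instance] Classical.propDecidable

lemma not_true_le_false : ¬((true : Bool) ≤ false) := by decide

lemma erelP_of {X : Type*} {f g : PMap X}
    (h : ∀ x, f x = some true → g x = some false → False) : ErelP f g := by
  intro x a b hf hg
  cases a
  · exact Bool.false_le b
  · cases b
    · exact (h x hf hg).elim
    · exact le_refl _

lemma exists_of_not_erelP {X : Type*} {f g : PMap X} (h : ¬ ErelP f g) :
    ∃ x, f x = some true ∧ g x = some false := by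
  by_contra hc
  push_neg at hc
  exact h (erelP_of fun x h1 h2 => hc x h1 h2)

lemma sph_top {f : PMap L} (hf : f ∈ SPHset L) : f ⊤ = some true := by
  obtain ⟨⟨⟨z, hz⟩, hup, -⟩, -, -⟩ := hf
  exact hup hz le_top

lemma sph_bot {f : PMap L} (hf : f ∈ SPHset L) : f ⊥ = some false := by
  obtain ⟨-, ⟨⟨z, hz⟩, hdown, -⟩, -⟩ := hf
  exact hdown hz bot_le

lemma isLatFilter_top : IsLatFilter L {x : L | x = ⊤} :=
  ⟨⟨⊤, rfl⟩, fun a b ha hab => top_le_iff.mp (ha ▸ hab), fun a b ha hb => by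
    simp only [Set.mem_setOf_eq] at *; rw [ha, hb, inf_idem]⟩

lemma isLatIdeal_bot : IsLatIdeal L {x : L | x = ⊥} :=
  ⟨⟨⊥, rfl⟩, fun a b ha hba => le_bot_iff.mp (ha ▸ hba), fun a b ha hb => by
    simp only [Set.mem_setOf_eq] at *; rw [ha, hb, sup_idem]⟩

lemma isLatFilter_Ici (a : L) : IsLatFilter L {x : L | a ≤ x} :=
  ⟨⟨a, le_refl a⟩, fun x y hx hxy => le_trans hx hxy, fun x y hx hy => le_inf hx hy⟩

lemma isLatIdeal_Iic (a : L) : IsLatIdeal L {x : L | x ≤ a} :=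
  ⟨⟨a, le_refl a⟩, fun x y hx hyx => le_trans hyx hx, fun x y hx hy => sup_le hx hy⟩

noncomputable def mkP (F I : Set L) : PMap L :=
  fun x => if x ∈ F then some true else if x ∈ I then some false else none

lemma mkP_true {F I : Set L} {x : L} (hx : x ∈ F) : mkP F I x = some true := if_pos hx

lemma mkP_true_iff {F I : Set L} {x : L} : mkP F I x = some true ↔ x ∈ F := by
  unfold mkP
  split_ifs with h1 h2
  · simp [h1]
  · simp [h1]
  · simp [h1]

lemma mkP_false_iff {F I : Set L} (hdis : ∀ y, y ∈ F → y ∈ I → False) {x : L} :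
    mkP F I x = some false ↔ x ∈ I := by
  unfold mkP
  split_ifs with h1 h2
  · exact iff_of_false (by simp) (fun h => hdis x h1 h)
  · exact iff_of_true rfl h2
  · exact iff_of_false (by simp) h2

lemma mkP_mem_SPHset {F I : Set L} (hF : IsLatFilter L F) (hI : IsLatIdeal L I)
    (hdis : ∀ y, y ∈ F → y ∈ I → False) : mkP F I ∈ SPHset L := by
  have h1 : pre1 (mkP F I) = F := Set.ext fun x => mkP_true_iff
  have h0 : pre0 (mkP F I) = I := Set.ext fun x => mkP_false_iff hdis
  refine ⟨h1.symm ▸ hF, h0.symm ▸ hI, ?_⟩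
  rw [h1, h0]
  exact Set.disjoint_left.mpr fun {x} hx1 hx2 => hdis x hx1 hx2

lemma exists_mem_filter_inter {F : Set L} (hF : IsLatFilter L F) {ι : Type*} {s : Set ι}
    (hs : s.Finite) {I : ι → Set L}
    (hdown : ∀ i ∈ s, ∀ ⦃x y : L⦄, x ∈ I i → y ≤ x → y ∈ I i)
    (hmeet : ∀ i ∈ s, ∃ y, y ∈ F ∧ y ∈ I i) :
    ∃ x, x ∈ F ∧ ∀ i ∈ s, x ∈ I i := by
  refine Set.Finite.induction_on
    (motive := fun s _ => (∀ i ∈ s, ∀ ⦃x y : L⦄, x ∈ I i → y ≤ x → y ∈ I i) →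
      (∀ i ∈ s, ∃ y, y ∈ F ∧ y ∈ I i) → ∃ x, x ∈ F ∧ ∀ i ∈ s, x ∈ I i)
    s hs ?_ ?_ hdown hmeet
  · intro _ _
    obtain ⟨z, hz⟩ := hF.1
    exact ⟨⊤, hF.2.1 hz le_top, fun i hi => absurd hi (Set.notMem_empty i)⟩
  · intro a s _ _ ih hdown' hmeet'
    obtain ⟨x, hxF, hxI⟩ := ih (fun i hi => hdown' i (Set.mem_insert_of_mem _ hi))
      (fun i hi => hmeet' i (Set.mem_insert_of_mem _ hi))
    obtain ⟨y, hyF, hyI⟩ := hmeet' a (Set.mem_insert _ _)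
    refine ⟨x ⊓ y, hF.2.2 hxF hyF, ?_⟩
    intro i hi
    rcases Set.mem_insert_iff.mp hi with rfl | hi'
    · exact hdown' i (Set.mem_insert _ _) hyI inf_le_right
    · exact hdown' i (Set.mem_insert_of_mem _ hi') (hxI i hi') inf_le_left

lemma exists_mem_ideal_inter {I0 : Set L} (hI0 : IsLatIdeal L I0) {ι : Type*} {s : Set ι}
    (hs : s.Finite) {F : ι → Set L}
    (hup : ∀ i ∈ s, ∀ ⦃x y : L⦄, x ∈ F i → x ≤ y → y ∈ F i)
    (hmeet : ∀ i ∈ s, ∃ y, y ∈ I0 ∧ y ∈ F i) :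
    ∃ x, x ∈ I0 ∧ ∀ i ∈ s, x ∈ F i := by
  refine Set.Finite.induction_on
    (motive := fun s _ => (∀ i ∈ s, ∀ ⦃x y : L⦄, x ∈ F i → x ≤ y → y ∈ F i) →
      (∀ i ∈ s, ∃ y, y ∈ I0 ∧ y ∈ F i) → ∃ x, x ∈ I0 ∧ ∀ i ∈ s, x ∈ F i)
    s hs ?_ ?_ hup hmeet
  · intro _ _
    obtain ⟨z, hz⟩ := hI0.1
    exact ⟨⊥, hI0.2.1 hz bot_le, fun i hi => absurd hi (Set.notMem_empty i)⟩
  · intro a s _ _ ih hup' hmeet'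
    obtain ⟨x, hxI, hxF⟩ := ih (fun i hi => hup' i (Set.mem_insert_of_mem _ hi))
      (fun i hi => hmeet' i (Set.mem_insert_of_mem _ hi))
    obtain ⟨y, hyI, hyF⟩ := hmeet' a (Set.mem_insert _ _)
    refine ⟨x ⊔ y, hI0.2.2 hxI hyI, ?_⟩
    intro i hi
    rcases Set.mem_insert_iff.mp hi with rfl | hi'
    · exact hup' i (Set.mem_insert _ _) hyF le_sup_right
    · exact hup' i (Set.mem_insert_of_mem _ hi') (hxF i hi') le_sup_left

lemma isClosed_VaS (a : L) : @IsClosed _ (tauS L) (VaS L a) := by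
  letI := tauS L
  rw [← isOpen_compl_iff]
  exact TopologicalSpace.GenerateOpen.basic _ ⟨a, Or.inl rfl⟩

lemma isClosed_WaS (a : L) : @IsClosed _ (tauS L) (WaS L a) := by
  letI := tauS L
  rw [← isOpen_compl_iff]
  exact TopologicalSpace.GenerateOpen.basic _ ⟨a, Or.inr rfl⟩

/-- The set of SPHs extending a given SPH (as partial maps); this is the closure
of the corresponding point. -/
def ExtS (g : SPHsub L) : Set (SPHsub L) :=
  {f | ∀ x : L, (g.1 x = some true → f.1 x = some true) ∧
      (g.1 x = some false → f.1 x = some false)}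

lemma self_mem_ExtS (g : SPHsub L) : g ∈ ExtS g := fun _ => ⟨id, id⟩

lemma isClosed_ExtS (g : SPHsub L) : @IsClosed _ (tauS L) (ExtS g) := by
  letI := tauS L
  have hrw : ExtS g = ⋂ x : L,
      ({f : SPHsub L | g.1 x = some true → f.1 x = some true} ∩
        {f : SPHsub L | g.1 x = some false → f.1 x = some false}) := by
    ext f
    simp only [ExtS, Set.mem_setOf_eq, Set.mem_iInter, Set.mem_inter_iff]
  rw [hrw]
  refine isClosed_iInter fun x => IsClosed.inter ?_ ?_
  · by_cases hx : g.1 x = some true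
    · have : {f : SPHsub L | g.1 x = some true → f.1 x = some true} = WaS L x := by
        ext f; simp [hx, WaS]
      rw [this]; exact isClosed_WaS x
    · have : {f : SPHsub L | g.1 x = some true → f.1 x = some true} = Set.univ := by
        ext f; simp [hx]
      rw [this]; exact isClosed_univ
  · by_cases hx : g.1 x = some false
    · have : {f : SPHsub L | g.1 x = some false → f.1 x = some false} = VaS L x := by
        ext f; simp [hx, VaS]
      rw [this]; exact isClosed_VaS x
    · have : {f : SPHsub L | g.1 x = some false → f.1 x = some false} = Set.univ := by
        ext f; simp [hx]
      rw [this]; exact isClosed_univ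

lemma linking {φ : PMap (SPHsub L)} (hφE : EPres (ES L) φ) {c d : SPHsub L}
    (hc : φ c = some true) (hd : φ d = some false) :
    ∃ x, c.1 x = some true ∧ d.1 x = some false :=
  exists_of_not_erelP fun hES => not_true_le_false (hφE (x := c) (y := d) hES hc hd)

lemma ext_true {φ : PMap (SPHsub L)} (hφ : φ ∈ MPM (ES L) (tauS L)) (g : SPHsub L)
    (hyp : ∀ d : SPHsub L, φ d = some false → ∃ x, g.1 x = some true ∧ d.1 x = some false) :
    φ g = some true := by
  classical
  letI := tauS L
  set ψ : PMap (SPHsub L) := fun f => if f ∈ ExtS g then some true else φ f with hψdef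
  have hExtD : ∀ f : SPHsub L, f ∈ ExtS g → φ f = some false → False := by
    intro f hfE hf
    obtain ⟨x, hgx, hfx⟩ := hyp f hf
    have h2 := (hfE x).1 hgx
    rw [h2] at hfx
    simp at hfx
  have hψ1 : pre1 ψ = ExtS g ∪ pre1 φ := by
    ext f
    by_cases hf : f ∈ ExtS g
    · simp [pre1, hψdef, hf]
    · simp [pre1, hψdef, hf]
  have hψ0 : pre0 ψ = pre0 φ := by
    ext f
    by_cases hf : f ∈ ExtS g
    · simp only [pre0, Set.mem_setOf_eq, hψdef, if_pos hf]
      exact iff_of_false (by simp) (fun h => hExtD f hf h)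
    · simp [pre0, hψdef, hf]
  have hψPM : PMorphT (ES L) (tauS L) ψ := by
    refine ⟨?_, ?_, ?_⟩
    · intro x y hxy u v hx hy
      cases u
      · exact Bool.false_le v
      · cases v
        · exfalso
          have hy0 : φ y = some false := by
            by_cases hyE : y ∈ ExtS g
            · rw [hψdef] at hy; simp [hyE] at hy
            · rw [hψdef] at hy; simpa [hyE] using hy
          by_cases hxE : x ∈ ExtS g
          · obtain ⟨z, hgz, hyz⟩ := hyp y hy0
            have hxz := (hxE z).1 hgz
            exact not_true_le_false (hxy hxz hyz)
          · have hx0 : φ x = some true := by rw [hψdef] at hx; simpa [hxE] using hx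
            exact not_true_le_false (hφ.1.1 (x := x) (y := y) hxy hx0 hy0)
        · exact le_refl _
    · rw [hψ1]
      exact (isClosed_ExtS g).union hφ.1.2.1
    · rw [hψ0]
      exact hφ.1.2.2
  have hψExt : PExt ψ φ := by
    intro f w hf
    by_cases hfE : f ∈ ExtS g
    · cases w
      · exact (hExtD f hfE hf).elim
      · simp [hψdef, hfE]
    · simp [hψdef, hfE, hf]
  have hEq : ψ = φ := hφ.2 ψ hψPM hψExt
  have hg : ψ g = some true := by simp [hψdef, self_mem_ExtS g]
  rwa [hEq] at hg

lemma ext_false {φ : PMap (SPHsub L)} (hφ : φ ∈ MPM (ES L) (tauS L)) (g : SPHsub L)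
    (hyp : ∀ c : SPHsub L, φ c = some true → ∃ x, c.1 x = some true ∧ g.1 x = some false) :
    φ g = some false := by
  classical
  letI := tauS L
  set ψ : PMap (SPHsub L) := fun f => if f ∈ ExtS g then some false else φ f with hψdef
  have hExtC : ∀ f : SPHsub L, f ∈ ExtS g → φ f = some true → False := by
    intro f hfE hf
    obtain ⟨x, hfx, hgx⟩ := hyp f hf
    have h2 := (hfE x).2 hgx
    rw [h2] at hfx
    simp at hfx
  have hψ0 : pre0 ψ = ExtS g ∪ pre0 φ := by
    ext f
    by_cases hf : f ∈ ExtS g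
    · simp [pre0, hψdef, hf]
    · simp [pre0, hψdef, hf]
  have hψ1 : pre1 ψ = pre1 φ := by
    ext f
    by_cases hf : f ∈ ExtS g
    · simp only [pre1, Set.mem_setOf_eq, hψdef, if_pos hf]
      exact iff_of_false (by simp) (fun h => hExtC f hf h)
    · simp [pre1, hψdef, hf]
  have hψPM : PMorphT (ES L) (tauS L) ψ := by
    refine ⟨?_, ?_, ?_⟩
    · intro x y hxy u v hx hy
      cases u
      · exact Bool.false_le v
      · cases v
        · exfalso
          have hx0 : φ x = some true := by
            by_cases hxE : x ∈ ExtS g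
            · rw [hψdef] at hx; simp [hxE] at hx
            · rw [hψdef] at hx; simpa [hxE] using hx
          by_cases hyE : y ∈ ExtS g
          · obtain ⟨z, hxz, hgz⟩ := hyp x hx0
            have hyz := (hyE z).2 hgz
            exact not_true_le_false (hxy hxz hyz)
          · have hy0 : φ y = some false := by rw [hψdef] at hy; simpa [hyE] using hy
            exact not_true_le_false (hφ.1.1 (x := x) (y := y) hxy hx0 hy0)
        · exact le_refl _
    · rw [hψ1]
      exact hφ.1.2.1
    · rw [hψ0]
      exact (isClosed_ExtS g).union hφ.1.2.2
  have hψExt : PExt ψ φ := by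
    intro f w hf
    by_cases hfE : f ∈ ExtS g
    · cases w
      · simp [hψdef, hfE]
      · exact (hExtC f hfE hf).elim
    · simp [hψdef, hfE, hf]
  have hEq : ψ = φ := hφ.2 ψ hψPM hψExt
  have hg : ψ g = some false := by simp [hψdef, self_mem_ExtS g]
  rwa [hEq] at hg

lemma pre1_evalS (a : L) : pre1 (evalS L a) = WaS L a := rfl

lemma pre0_evalS (a : L) : pre0 (evalS L a) = VaS L a := rfl

lemma evalS_PMorphT (a : L) : PMorphT (ES L) (tauS L) (evalS L a) := by
  refine ⟨?_, ?_, ?_⟩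
  · intro x y hxy u v hx hy
    exact hxy hx hy
  · rw [pre1_evalS]; exact isClosed_WaS a
  · rw [pre0_evalS]; exact isClosed_VaS a

lemma evalS_mem_MPM (a : L) : evalS L a ∈ MPM (ES L) (tauS L) := by
  refine ⟨evalS_PMorphT a, ?_⟩
  intro ψ hψPM hψExt
  funext f
  rcases hfa : f.1 a with - | b
  · show ψ f = evalS L a f
    have heva : evalS L a f = none := hfa
    rw [heva]
    rcases hψf : ψ f with - | c
    · rfl
    · exfalso
      cases c
      · -- ψ f = some false : use g2 = (↑a, pre0 f)
        have hdis : ∀ y, y ∈ {x : L | a ≤ x} → y ∈ pre0 f.1 → False := by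
          intro y hy1 hy2
          have h3 : f.1 a = some false := f.2.2.1.2.1 hy2 hy1
          rw [hfa] at h3
          simp at h3
        set g2 : SPHsub L :=
          ⟨mkP {x : L | a ≤ x} (pre0 f.1),
            mkP_mem_SPHset (isLatFilter_Ici a) f.2.2.1 hdis⟩ with hg2def
        have hg2a : g2.1 a = some true := mkP_true (le_refl a)
        have hES : ES L g2 f := by
          refine erelP_of ?_
          intro x h1 h2
          have hax : a ≤ x := mkP_true_iff.mp h1
          exact hdis x hax h2
        have hψg2 : ψ g2 = some true := hψExt (show evalS L a g2 = some true from hg2a)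
        exact not_true_le_false (hψPM.1 (x := g2) (y := f) hES hψg2 hψf)
      · -- ψ f = some true : use h2 = (pre1 f, ↓a)
        have hdis : ∀ y, y ∈ pre1 f.1 → y ∈ {x : L | x ≤ a} → False := by
          intro y hy1 hy2
          have h3 : f.1 a = some true := f.2.1.2.1 hy1 hy2
          rw [hfa] at h3
          simp at h3
        set h2 : SPHsub L :=
          ⟨mkP (pre1 f.1) {x : L | x ≤ a},
            mkP_mem_SPHset f.2.1 (isLatIdeal_Iic a) hdis⟩ with hh2def
        have hh2a : h2.1 a = some false := by
          apply (mkP_false_iff hdis).mpr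
          exact le_refl a
        have hES : ES L f h2 := by
          refine erelP_of ?_
          intro x h1 h2x
          exact hdis x h1 ((mkP_false_iff hdis).mp h2x)
        have hψh2 : ψ h2 = some false := hψExt (show evalS L a h2 = some false from hh2a)
        exact not_true_le_false (hψPM.1 (x := f) (y := h2) hES hψf hψh2)
  · show ψ f = evalS L a f
    rw [show evalS L a f = some b from hfa]
    exact hψExt (show evalS L a f = some b from hfa)

lemma le_iff_pre1_subset (a b : L) :
    a ≤ b ↔ pre1 (evalS L a) ⊆ pre1 (evalS L b) := by
  constructor
  · intro hab f hf
    have h1 : f.1 a = some true := hf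
    show f.1 b = some true
    exact f.2.1.2.1 h1 hab
  · intro hsub
    by_contra hab
    have hdis : ∀ y, y ∈ {x : L | a ≤ x} → y ∈ {x : L | x ≤ b} → False := by
      intro y hy1 hy2
      exact hab (le_trans hy1 hy2)
    set f : SPHsub L :=
      ⟨mkP {x : L | a ≤ x} {x : L | x ≤ b},
        mkP_mem_SPHset (isLatFilter_Ici a) (isLatIdeal_Iic b) hdis⟩ with hfdef
    have hfa : f ∈ pre1 (evalS L a) := show f.1 a = some true from mkP_true (le_refl a)
    have hfb : f.1 b = some true := hsub hfa
    exact hab (mkP_true_iff.mp hfb)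

theorem mpm_eq_evalS {φ : PMap (SPHsub L)} (hφ : φ ∈ MPM (ES L) (tauS L)) :
    ∃ a : L, φ = evalS L a := by
  classical
  letI := tauS L
  set A : Set L := {a : L | ∀ c : SPHsub L, φ c = some true → c.1 a = some true} with hAdef
  set B : Set L := {b : L | ∀ d : SPHsub L, φ d = some false → d.1 b = some false} with hBdef
  have htopA : (⊤ : L) ∈ A := fun c hc => sph_top c.2
  have hbotB : (⊥ : L) ∈ B := fun d hd => sph_bot d.2
  have hAfilter : IsLatFilter L A :=
    ⟨⟨⊤, htopA⟩, fun a b ha hab c hc => c.2.1.2.1 (ha c hc) hab,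
      fun a b ha hb c hc => c.2.1.2.2 (ha c hc) (hb c hc)⟩
  have hBideal : IsLatIdeal L B :=
    ⟨⟨⊥, hbotB⟩, fun a b ha hba d hd => d.2.2.1.2.1 (ha d hd) hba,
      fun a b ha hb d hd => d.2.2.1.2.2 (ha d hd) (hb d hd)⟩
  by_cases hABex : ∃ a, a ∈ A ∧ a ∈ B
  · obtain ⟨a, haA, haB⟩ := hABex
    refine ⟨a, ?_⟩
    have hext : PExt (evalS L a) φ := by
      intro f w hf
      cases w
      · exact haB f hf
      · exact haA f hf
    exact (hφ.2 (evalS L a) (evalS_PMorphT a) hext).symm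
  · exfalso
    push_neg at hABex
    have hdisAB : ∀ y, y ∈ A → y ∈ B → False := fun y h1 h2 => hABex y h1 h2
    set h : SPHsub L := ⟨mkP A B, mkP_mem_SPHset hAfilter hBideal hdisAB⟩ with hhdef
    have hbotA : (⊥ : L) ∉ A := fun hb => hABex ⊥ hb hbotB
    have htopB : (⊤ : L) ∉ B := fun hb => hABex ⊤ htopA hb
    -- Step 1 : h ∈ pre0 φ
    have hD : φ h = some false := by
      by_contra hhD
      obtain ⟨v, hvB, hhv, hvsub⟩ :=
        (TopologicalSpace.isTopologicalBasis_of_subbasis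
          (rfl : tauS L = TopologicalSpace.generateFrom
            {U | ∃ a : L, U = (VaS L a)ᶜ ∨ U = (WaS L a)ᶜ})).exists_subset_of_mem_open
          (show h ∈ (pre0 φ)ᶜ from hhD) hφ.1.2.2.isOpen_compl
      obtain ⟨𝒻, ⟨h𝒻fin, h𝒻sub⟩, rfl⟩ := hvB
      have claim : ∀ d : SPHsub L, φ d = some false →
          ∃ s : L, (VaS L s)ᶜ ∈ 𝒻 ∧ d.1 s = some false ∧ s ∉ B := by
        intro d hd
        have hdis_p : ∀ y, y ∈ {x : L | x = ⊤} → y ∈ pre0 d.1 → False := by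
          intro y hy1 hy2
          have h2 : d.1 y = some false := hy2
          have hy1' : y = ⊤ := hy1
          rw [hy1', sph_top d.2] at h2
          simp at h2
        set p : SPHsub L :=
          ⟨mkP {x : L | x = ⊤} (pre0 d.1),
            mkP_mem_SPHset isLatFilter_top d.2.2.1 hdis_p⟩ with hpdef
        have hp : φ p = some false := by
          apply ext_false hφ
          intro c hc
          obtain ⟨x, hcx, hdx⟩ := linking hφ.1.1 hc hd
          exact ⟨x, hcx, (mkP_false_iff hdis_p).mpr hdx⟩
        have hpnot : ∃ U ∈ 𝒻, p ∉ U := by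
          by_contra hcc
          push_neg at hcc
          exact hvsub (Set.mem_sInter.mpr fun U hU => hcc U hU) hp
        obtain ⟨U, hU𝒻, hpU⟩ := hpnot
        obtain ⟨s, hs | hs⟩ := h𝒻sub hU𝒻
        · subst hs
          have hps : p ∈ VaS L s := not_not.mp hpU
          have hsd : s ∈ pre0 d.1 := (mkP_false_iff hdis_p).mp hps
          have hhU : h ∈ (VaS L s)ᶜ := (Set.mem_sInter.mp hhv) _ hU𝒻
          have hsB : s ∉ B := fun hsB =>
            hhU (show h.1 s = some false from (mkP_false_iff hdisAB).mpr hsB)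
          exact ⟨s, hU𝒻, hsd, hsB⟩
        · subst hs
          exfalso
          have hps : p ∈ WaS L s := not_not.mp hpU
          have hstop : s ∈ {x : L | x = ⊤} := mkP_true_iff.mp hps
          have hstop' : s = ⊤ := hstop
          have hhU : h ∈ (WaS L s)ᶜ := (Set.mem_sInter.mp hhv) _ hU𝒻
          apply hhU
          show h.1 s = some true
          rw [hstop']
          exact mkP_true htopA
      have hDne : ∃ d : SPHsub L, φ d = some false := by
        by_contra hE
        push_neg at hE
        exact htopB (fun d hd => absurd hd (hE d))
      obtain ⟨d₀, hd₀⟩ := hDne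
      obtain ⟨s₀, hs₀𝒻, -, hs₀B⟩ := claim d₀ hd₀
      set 𝒻' : Set (Set (SPHsub L)) :=
        {U | U ∈ 𝒻 ∧ ∃ s : L, U = (VaS L s)ᶜ ∧ s ∉ B} with h𝒻'def
      have h𝒻'ne : ((VaS L s₀)ᶜ) ∈ 𝒻' := ⟨hs₀𝒻, s₀, rfl, hs₀B⟩
      haveI hfin' : Finite ↥𝒻' := (h𝒻fin.subset (fun U hU => hU.1)).to_subtype
      have hsel : ∀ U : ↥𝒻', ∃ (s : L) (d : SPHsub L),
          (U : Set (SPHsub L)) = (VaS L s)ᶜ ∧ φ d = some false ∧ ¬ d.1 s = some false := by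
        rintro ⟨U, hU𝒻, s, rfl, hsB⟩
        have h5 : ¬ ∀ d : SPHsub L, φ d = some false → d.1 s = some false := hsB
        push_neg at h5
        obtain ⟨d, hd1, hd2⟩ := h5
        exact ⟨s, d, rfl, hd1, hd2⟩
      choose sF dF hVeq hdF hdFs using hsel
      set J : Set L := {x | ∀ U : ↥𝒻', x ∈ pre0 (dF U).1} with hJdef
      have hJideal : IsLatIdeal L J :=
        ⟨⟨⊥, fun U => sph_bot (dF U).2⟩,
          fun x y hx hyx U => (dF U).2.2.1.2.1 (hx U) hyx,
          fun x y hx hy U => (dF U).2.2.1.2.2 (hx U) (hy U)⟩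
      have htopJ : (⊤ : L) ∉ J := by
        intro hJ
        have h2 : (dF ⟨_, h𝒻'ne⟩).1 ⊤ = some false := hJ ⟨_, h𝒻'ne⟩
        rw [sph_top (dF ⟨_, h𝒻'ne⟩).2] at h2
        simp at h2
      have hdisJ : ∀ y, y ∈ {x : L | x = ⊤} → y ∈ J → False := by
        intro y hy1 hy2
        have hy1' : y = ⊤ := hy1
        rw [hy1'] at hy2
        exact htopJ hy2
      set dstar : SPHsub L :=
        ⟨mkP {x : L | x = ⊤} J, mkP_mem_SPHset isLatFilter_top hJideal hdisJ⟩ with hdsdef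
      have hdstar : φ dstar = some false := by
        apply ext_false hφ
        intro c hc
        obtain ⟨x, hxc, hxJ⟩ := exists_mem_filter_inter c.2.1
          (Set.finite_univ : (Set.univ : Set ↥𝒻').Finite)
          (fun U _ x y hx hyx => (dF U).2.2.1.2.1 hx hyx)
          (fun U _ => linking hφ.1.1 hc (hdF U))
        exact ⟨x, hxc, (mkP_false_iff hdisJ).mpr (fun U => hxJ U (Set.mem_univ U))⟩
      obtain ⟨s, hs𝒻, hsd, hsB⟩ := claim dstar hdstar
      have hU' : ((VaS L s)ᶜ) ∈ 𝒻' := ⟨hs𝒻, s, rfl, hsB⟩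
      have hsJ : s ∈ J := (mkP_false_iff hdisJ).mp hsd
      have h1 : (dF ⟨_, hU'⟩).1 s = some false := hsJ ⟨_, hU'⟩
      have h2 : VaS L s = VaS L (sF ⟨_, hU'⟩) :=
        compl_inj_iff.mp (hVeq ⟨_, hU'⟩)
      have h4 : (dF ⟨_, hU'⟩) ∈ VaS L (sF ⟨_, hU'⟩) := by
        rw [← h2]
        exact h1
      exact hdFs ⟨_, hU'⟩ h4
    -- Step 2 : h ∈ pre1 φ
    have hC : φ h = some true := by
      by_contra hhC
      obtain ⟨v, hvB, hhv, hvsub⟩ :=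
        (TopologicalSpace.isTopologicalBasis_of_subbasis
          (rfl : tauS L = TopologicalSpace.generateFrom
            {U | ∃ a : L, U = (VaS L a)ᶜ ∨ U = (WaS L a)ᶜ})).exists_subset_of_mem_open
          (show h ∈ (pre1 φ)ᶜ from hhC) hφ.1.2.1.isOpen_compl
      obtain ⟨𝒻, ⟨h𝒻fin, h𝒻sub⟩, rfl⟩ := hvB
      have claim : ∀ c : SPHsub L, φ c = some true →
          ∃ t : L, (WaS L t)ᶜ ∈ 𝒻 ∧ c.1 t = some true ∧ t ∉ A := by
        intro c hc
        have hdis_q : ∀ y, y ∈ pre1 c.1 → y ∈ {x : L | x = ⊥} → False := by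
          intro y hy1 hy2
          have h2 : c.1 y = some true := hy1
          have hy2' : y = ⊥ := hy2
          rw [hy2', sph_bot c.2] at h2
          simp at h2
        set q : SPHsub L :=
          ⟨mkP (pre1 c.1) {x : L | x = ⊥},
            mkP_mem_SPHset c.2.1 isLatIdeal_bot hdis_q⟩ with hqdef
        have hq : φ q = some true := by
          apply ext_true hφ
          intro d hd
          obtain ⟨x, hcx, hdx⟩ := linking hφ.1.1 hc hd
          exact ⟨x, mkP_true hcx, hdx⟩
        have hqnot : ∃ U ∈ 𝒻, q ∉ U := by
          by_contra hcc
          push_neg at hcc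
          exact hvsub (Set.mem_sInter.mpr fun U hU => hcc U hU) hq
        obtain ⟨U, hU𝒻, hqU⟩ := hqnot
        obtain ⟨t, ht | ht⟩ := h𝒻sub hU𝒻
        · subst ht
          exfalso
          have hqt : q ∈ VaS L t := not_not.mp hqU
          have htbot : t = ⊥ := (mkP_false_iff hdis_q).mp hqt
          have hhU : h ∈ (VaS L t)ᶜ := (Set.mem_sInter.mp hhv) _ hU𝒻
          apply hhU
          show h.1 t = some false
          rw [htbot]
          exact (mkP_false_iff hdisAB).mpr hbotB
        · subst ht
          have hqt : q ∈ WaS L t := not_not.mp hqU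
          have htc : t ∈ pre1 c.1 := mkP_true_iff.mp hqt
          have hhU : h ∈ (WaS L t)ᶜ := (Set.mem_sInter.mp hhv) _ hU𝒻
          have htA : t ∉ A := fun htA =>
            hhU (show h.1 t = some true from mkP_true htA)
          exact ⟨t, hU𝒻, htc, htA⟩
      have hCne : ∃ c : SPHsub L, φ c = some true := by
        by_contra hE
        push_neg at hE
        exact hbotA (fun c hc => absurd hc (hE c))
      obtain ⟨c₀, hc₀⟩ := hCne
      obtain ⟨t₀, ht₀𝒻, -, ht₀A⟩ := claim c₀ hc₀
      set 𝒻'' : Set (Set (SPHsub L)) :=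
        {U | U ∈ 𝒻 ∧ ∃ t : L, U = (WaS L t)ᶜ ∧ t ∉ A} with h𝒻''def
      have h𝒻''ne : ((WaS L t₀)ᶜ) ∈ 𝒻'' := ⟨ht₀𝒻, t₀, rfl, ht₀A⟩
      haveI hfin'' : Finite ↥𝒻'' := (h𝒻fin.subset (fun U hU => hU.1)).to_subtype
      have hsel : ∀ U : ↥𝒻'', ∃ (t : L) (c : SPHsub L),
          (U : Set (SPHsub L)) = (WaS L t)ᶜ ∧ φ c = some true ∧ ¬ c.1 t = some true := by
        rintro ⟨U, hU𝒻, t, rfl, htA⟩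
        have h5 : ¬ ∀ c : SPHsub L, φ c = some true → c.1 t = some true := htA
        push_neg at h5
        obtain ⟨c, hc1, hc2⟩ := h5
        exact ⟨t, c, rfl, hc1, hc2⟩
      choose tF cF hWeq hcF hcFt using hsel
      set G : Set L := {x | ∀ U : ↥𝒻'', x ∈ pre1 (cF U).1} with hGdef
      have hGfilter : IsLatFilter L G :=
        ⟨⟨⊤, fun U => sph_top (cF U).2⟩,
          fun x y hx hxy U => (cF U).2.1.2.1 (hx U) hxy,
          fun x y hx hy U => (cF U).2.1.2.2 (hx U) (hy U)⟩
      have hbotG : (⊥ : L) ∉ G := by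
        intro hG
        have h2 : (cF ⟨_, h𝒻''ne⟩).1 ⊥ = some true := hG ⟨_, h𝒻''ne⟩
        rw [sph_bot (cF ⟨_, h𝒻''ne⟩).2] at h2
        simp at h2
      have hdisG : ∀ y, y ∈ G → y ∈ {x : L | x = ⊥} → False := by
        intro y hy1 hy2
        have hy2' : y = ⊥ := hy2
        rw [hy2'] at hy1
        exact hbotG hy1
      set cstar : SPHsub L :=
        ⟨mkP G {x : L | x = ⊥}, mkP_mem_SPHset hGfilter isLatIdeal_bot hdisG⟩ with hcsdef
      have hcstar : φ cstar = some true := by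
        apply ext_true hφ
        intro d hd
        obtain ⟨x, hxd, hxG⟩ := exists_mem_ideal_inter d.2.2.1
          (Set.finite_univ : (Set.univ : Set ↥𝒻'').Finite)
          (fun U _ x y hx hxy => (cF U).2.1.2.1 hx hxy)
          (fun U _ => by
            obtain ⟨y, h1, h2⟩ := linking hφ.1.1 (hcF U) hd
            exact ⟨y, h2, h1⟩)
        exact ⟨x, mkP_true (fun U => hxG U (Set.mem_univ U)), hxd⟩
      obtain ⟨t, ht𝒻, htd, htA⟩ := claim cstar hcstar
      have hU' : ((WaS L t)ᶜ) ∈ 𝒻'' := ⟨ht𝒻, t, rfl, htA⟩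
      have htG : t ∈ G := mkP_true_iff.mp htd
      have h1 : (cF ⟨_, hU'⟩).1 t = some true := htG ⟨_, hU'⟩
      have h2 : WaS L t = WaS L (tF ⟨_, hU'⟩) :=
        compl_inj_iff.mp (hWeq ⟨_, hU'⟩)
      have h4 : (cF ⟨_, hU'⟩) ∈ WaS L (tF ⟨_, hU'⟩) := by
        rw [← h2]
        exact h1
      exact hcFt ⟨_, hU'⟩ h4
    rw [hC] at hD
    simp at hD

end Helpers


/-- Let `L` be a bounded lattice. Then (i) every
`φ ∈ MPM(D̄(L),2_τ)` has the form `ē_a` for some `a ∈ L`, and (ii) the map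
`a ↦ ē_a` is an order-isomorphism from `L` onto `MPM(D̄(L),2_τ)` ordered by
`φ ≤ ψ ↔ φ⁻¹(1) ⊆ ψ⁻¹(1)`: it is a bijection of `L` onto `MPM(D̄(L),2_τ)`,
and `a ≤ b` iff `ē_a⁻¹(1) ⊆ ē_b⁻¹(1)`. -/
theorem stmt_15 (L : Type*) [Lattice L] [BoundedOrder L] :
    (∀ φ ∈ MPM (ES L) (tauS L), ∃ a : L, φ = evalS L a) ∧
    (∀ a : L, evalS L a ∈ MPM (ES L) (tauS L)) ∧
    Function.Injective (evalS L) ∧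
    (∀ a b : L, a ≤ b ↔ pre1 (evalS L a) ⊆ pre1 (evalS L b)) := by
  refine ⟨fun φ hφ => mpm_eq_evalS hφ, fun a => evalS_mem_MPM a, ?_,
    fun a b => le_iff_pre1_subset a b⟩
  intro a b hab
  exact le_antisymm
    ((le_iff_pre1_subset a b).mpr (by rw [hab]))
    ((le_iff_pre1_subset b a).mpr (by rw [hab]))

end CanExt
end

section
/- Let L be a bounded lattice, X = D♭(L) = (MPH(L,2_B), E) and Y = D̄♭(L) = (SPH(L,2_B), E). Then for every φ ∈ MPE(X,2) the partial map Ψ(φ) belongs to MPE(Y,2), and the map Ψ : MPE(X,2) → MPE(Y,2) is an order-isomorphism between these complete lattices (each ordered by φ ≤ ψ iff φ⁻¹(1) ⊆ ψ⁻¹(1)); moreover Ψ(e_a) = ē_a for every a ∈ L. -/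
namespace CanExt

open Classical

section GenLemmas
variable {X : Type*}

lemma erelp_refl {L : Type*} (f : PMap L) : ErelP f f := by
  intro x a b ha hb
  rw [ha] at hb
  exact le_of_eq (Option.some.inj hb)

lemma not_erelp_iff {L : Type*} {f g : PMap L} :
    ¬ ErelP f g ↔ ∃ x, f x = some true ∧ g x = some false := by
  constructor
  · intro h
    by_contra hc
    push_neg at hc
    apply h
    intro x a b ha hb
    cases a with
    | false => exact Bool.false_le b
    | true =>
      cases b with
      | true => exact le_refl _
      | false => exact absurd hb (hc x ha)
  · rintro ⟨x, hx1, hx0⟩ h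
    exact absurd (h hx1 hx0) (by decide)

lemma mem_mpe_iff {E : X → X → Prop} {φ : PMap X} :
    φ ∈ MPE E ↔ EPres E φ ∧ ∀ f, φ f = none →
      (∃ g, φ g = some false ∧ E f g) ∧ (∃ g, φ g = some true ∧ E g f) := by
  classical
  constructor
  · rintro ⟨h1, hmax⟩
    refine ⟨h1, fun f hf => ⟨?_, ?_⟩⟩
    · by_contra hc
      push_neg at hc
      set ψ : PMap X := Function.update φ f (some true) with hψ
      have hpres : EPres E ψ := by
        intro x y hxy a b hx hy
        rw [hψ] at hx hy
        by_cases hxf : x = f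
        · subst hxf
          rw [Function.update_self] at hx
          by_cases hyf : y = x
          · subst hyf
            rw [Function.update_self] at hy
            rw [← Option.some.inj hx, ← Option.some.inj hy]
          · rw [Function.update_of_ne hyf] at hy
            cases b with
            | true => exact Bool.le_true a
            | false => exact absurd hxy (hc y hy)
        · rw [Function.update_of_ne hxf] at hx
          by_cases hyf : y = f
          · subst hyf
            rw [Function.update_self] at hy
            rw [← Option.some.inj hy]
            exact Bool.le_true a
          · rw [Function.update_of_ne hyf] at hy
            exact h1 hxy hx hy
      have hext : PExt ψ φ := by
        intro x a hx
        have : x ≠ f := fun h => by rw [h, hf] at hx; exact nomatch hx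
        rw [hψ, Function.update_of_ne this]; exact hx
      have := hmax ψ hpres hext
      have : ψ f = φ f := by rw [this]
      rw [hψ, Function.update_self, hf] at this
      exact nomatch this
    · by_contra hc
      push_neg at hc
      set ψ : PMap X := Function.update φ f (some false) with hψ
      have hpres : EPres E ψ := by
        intro x y hxy a b hx hy
        rw [hψ] at hx hy
        by_cases hxf : x = f
        · subst hxf
          rw [Function.update_self] at hx
          by_cases hyf : y = x
          · subst hyf
            rw [Function.update_self] at hy
            rw [← Option.some.inj hx, ← Option.some.inj hy]
          · rw [← Option.some.inj hx]
            exact Bool.false_le b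
        · rw [Function.update_of_ne hxf] at hx
          by_cases hyf : y = f
          · subst hyf
            rw [Function.update_self] at hy
            cases a with
            | false => exact Bool.false_le b
            | true => exact absurd hxy (hc x hx)
          · rw [Function.update_of_ne hyf] at hy
            exact h1 hxy hx hy
      have hext : PExt ψ φ := by
        intro x a hx
        have : x ≠ f := fun h => by rw [h, hf] at hx; exact nomatch hx
        rw [hψ, Function.update_of_ne this]; exact hx
      have := hmax ψ hpres hext
      have : ψ f = φ f := by rw [this]
      rw [hψ, Function.update_self, hf] at this
      exact nomatch this
  · rintro ⟨h1, h2⟩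
    refine ⟨h1, fun ψ hψ hext => ?_⟩
    funext x
    rcases hφx : φ x with _ | a
    · rcases hψx : ψ x with _ | a
      · rfl
      · obtain ⟨⟨g0, hg0, hE0⟩, ⟨g1, hg1, hE1⟩⟩ := h2 x hφx
        cases a with
        | true => exact absurd (hψ hE0 hψx (hext hg0)) (by decide)
        | false => exact absurd (hψ hE1 (hext hg1) hψx) (by decide)
    · exact hext hφx


lemma mpe_pre0_eq {E : X → X → Prop} (hrefl : ∀ x, E x x) {φ : PMap X} (hφ : φ ∈ MPE E) :
    pre0 φ = {g | ∀ h, φ h = some true → ¬ E h g} := by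
  ext g
  constructor
  · intro hg h hh hE
    exact absurd (hφ.1 hE hh hg) (by decide)
  · intro hg
    rcases hx : φ g with _ | a
    · obtain ⟨_, ⟨h, hh, hE⟩⟩ := (mem_mpe_iff.mp hφ).2 g hx
      exact absurd hE (hg h hh)
    · cases a with
      | true => exact absurd (hrefl g) (hg g hx)
      | false => exact hx

lemma mpe_pre1_eq {E : X → X → Prop} (hrefl : ∀ x, E x x) {φ : PMap X} (hφ : φ ∈ MPE E) :
    pre1 φ = {g | ∀ h, φ h = some false → ¬ E g h} := by
  ext g
  constructor
  · intro hg h hh hE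
    exact absurd (hφ.1 hE hg hh) (by decide)
  · intro hg
    rcases hx : φ g with _ | a
    · obtain ⟨⟨h, hh, hE⟩, _⟩ := (mem_mpe_iff.mp hφ).2 g hx
      exact absurd hE (hg h hh)
    · cases a with
      | false => exact absurd (hrefl g) (hg g hx)
      | true => exact hx

lemma mpe_eq_of_pre1 {E : X → X → Prop} (hrefl : ∀ x, E x x) {φ ψ : PMap X}
    (hφ : φ ∈ MPE E) (hψ : ψ ∈ MPE E) (h1 : pre1 φ = pre1 ψ) : φ = ψ := by
  have h0 : pre0 φ = pre0 ψ := by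
    rw [mpe_pre0_eq hrefl hφ, mpe_pre0_eq hrefl hψ]
    ext g
    constructor
    · intro hg h hh
      exact hg h (h1 ▸ hh : h ∈ pre1 φ)
    · intro hg h hh
      exact hg h (h1 ▸ hh : h ∈ pre1 ψ)
  funext x
  rcases hx : φ x with _ | a
  · rcases hy : ψ x with _ | b
    · rfl
    · exfalso
      cases b with
      | true =>
        have : x ∈ pre1 φ := h1 ▸ (hy : x ∈ pre1 ψ)
        rw [this] at hx; exact nomatch hx
      | false =>
        have : x ∈ pre0 φ := h0 ▸ (hy : x ∈ pre0 ψ)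
        rw [this] at hx; exact nomatch hx
  · cases a with
    | true => exact ((h1 ▸ (hx : x ∈ pre1 φ)) : x ∈ pre1 ψ).symm
    | false => exact ((h0 ▸ (hx : x ∈ pre0 φ)) : x ∈ pre0 ψ).symm


end GenLemmas

section LatLemmas

variable {L : Type*} [Lattice L] [BoundedOrder L]

/-- Separation: in a partial homomorphism, no `1`-point lies below a `0`-point. -/
lemma sep_of_phom {f : PMap L} (hf : PHom L f) :
    ∀ ⦃c d : L⦄, f c = some true → f d = some false → ¬ c ≤ d := by
  intro c d hc hd hcd
  have h := (hf.2.2 hc hd).2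
  rw [sup_eq_right.mpr hcd, hd] at h
  exact absurd (Option.some.inj h) (by decide)

open Classical in
/-- The partial map determined by a pair of sets. -/
noncomputable def pairMap (F I : Set L) : PMap L := fun x =>
  if x ∈ F then some true else if x ∈ I then some false else none

lemma pairMap_true {F I : Set L} {x : L} : pairMap F I x = some true ↔ x ∈ F := by
  unfold pairMap
  by_cases h : x ∈ F
  · simp [h]
  · rw [if_neg h]
    constructor
    · intro hx
      by_cases h2 : x ∈ I
      · rw [if_pos h2] at hx; exact absurd hx (by decide)
      · rw [if_neg h2] at hx; exact nomatch hx
    · intro hx; exact absurd hx h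

lemma pairMap_false {F I : Set L} {x : L} (hd : Disjoint F I) :
    pairMap F I x = some false ↔ x ∈ I := by
  unfold pairMap
  by_cases h : x ∈ F
  · rw [if_pos h]
    constructor
    · intro hx; exact absurd hx (by decide)
    · intro hx; exact absurd (Set.disjoint_left.mp hd h hx) (fun h => h)
  · rw [if_neg h]
    by_cases h2 : x ∈ I
    · simp [h2]
    · rw [if_neg h2]
      exact ⟨fun hx => (nomatch hx), fun hx => absurd hx h2⟩

lemma pre1_pairMap {F I : Set L} : pre1 (pairMap F I) = F := by
  ext x; exact pairMap_true

lemma pre0_pairMap {F I : Set L} (hd : Disjoint F I) : pre0 (pairMap F I) = I := by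
  ext x; exact pairMap_false hd

lemma pairMap_sph {F I : Set L} (hF : IsLatFilter L F) (hI : IsLatIdeal L I)
    (hd : Disjoint F I) : pairMap F I ∈ SPHset L := by
  refine ⟨?_, ?_, ?_⟩
  · rw [pre1_pairMap]; exact hF
  · rw [pre0_pairMap hd]; exact hI
  · rw [pre1_pairMap, pre0_pairMap hd]; exact hd

/-- Every SPH is a partial homomorphism. -/
lemma sph_phom {f : PMap L} (hf : f ∈ SPHset L) : PHom L f := by
  obtain ⟨⟨⟨w1, hw1⟩, hFup, hFmeet⟩, ⟨⟨w0, hw0⟩, hIdown, hIjoin⟩, hd⟩ := hf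
  refine ⟨?_, ?_, ?_⟩
  · exact hIdown hw0 bot_le
  · exact hFup hw1 le_top
  · intro a b x y ha hb
    cases x with
    | true =>
      cases y with
      | true =>
        exact ⟨hFmeet ha hb, hFup ha le_sup_left⟩
      | false =>
        refine ⟨hIdown hb inf_le_right, hFup ha le_sup_left⟩
    | false =>
      cases y with
      | true =>
        exact ⟨hIdown ha inf_le_left, hFup hb le_sup_right⟩
      | false =>
        exact ⟨hIdown ha inf_le_left, hIjoin ha hb⟩

/-- Every maximal partial homomorphism is a special partial homomorphism. -/
lemma mph_sph {f : PMap L} (hf : f ∈ MPHset L) : f ∈ SPHset L := by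
  obtain ⟨hph, hmax⟩ := hf
  have hsep := sep_of_phom hph
  set F : Set L := {x | ∃ c, f c = some true ∧ c ≤ x} with hFdef
  set I : Set L := {x | ∃ d, f d = some false ∧ x ≤ d} with hIdef
  have hF : IsLatFilter L F := by
    refine ⟨⟨⊤, ⊤, hph.2.1, le_rfl⟩, ?_, ?_⟩
    · rintro a b ⟨c, hc, hca⟩ hab
      exact ⟨c, hc, hca.trans hab⟩
    · rintro a b ⟨c, hc, hca⟩ ⟨c', hc', hc'b⟩
      exact ⟨c ⊓ c', (hph.2.2 hc hc').1, inf_le_inf hca hc'b⟩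
  have hI : IsLatIdeal L I := by
    refine ⟨⟨⊥, ⊥, hph.1, le_rfl⟩, ?_, ?_⟩
    · rintro a b ⟨d, hd, had⟩ hba
      exact ⟨d, hd, hba.trans had⟩
    · rintro a b ⟨d, hd, had⟩ ⟨d', hd', hbd'⟩
      exact ⟨d ⊔ d', (hph.2.2 hd hd').2, sup_le_sup had hbd'⟩
  have hdis : Disjoint F I := by
    rw [Set.disjoint_left]
    rintro x ⟨c, hc, hcx⟩ ⟨d, hd, hxd⟩
    exact hsep hc hd (hcx.trans hxd)
  have hsphm := pairMap_sph hF hI hdis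
  have hext : PExt (pairMap F I) f := by
    intro x a hx
    cases a with
    | true => exact pairMap_true.mpr ⟨x, hx, le_rfl⟩
    | false => exact (pairMap_false hdis).mpr ⟨x, hx, le_rfl⟩
  have heq : pairMap F I = f := hmax _ (sph_phom hsphm) hext
  rw [← heq]
  exact hsphm

/-! ### Zorn's lemma: extending partial homomorphisms to maximal ones -/

def Functional {α : Type*} (S : Set (α × Bool)) : Prop :=
  ∀ ⦃x : α⦄ ⦃a b : Bool⦄, (x, a) ∈ S → (x, b) ∈ S → a = b

def graphOf {α : Type*} (f : PMap α) : Set (α × Bool) := {p | f p.1 = some p.2}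

open Classical in
noncomputable def ofGraph {α : Type*} (S : Set (α × Bool)) : PMap α := fun x =>
  if h : ∃ b, (x, b) ∈ S then some (Classical.choose h) else none

lemma functional_graphOf {α : Type*} (f : PMap α) : Functional (graphOf f) := by
  intro x a b ha hb
  exact Option.some.inj ((ha : f x = some a).symm.trans hb)

lemma mem_ofGraph {α : Type*} {S : Set (α × Bool)} (hS : Functional S) {x : α} {b : Bool} :
    ofGraph S x = some b ↔ (x, b) ∈ S := by
  unfold ofGraph
  by_cases h : ∃ b', (x, b') ∈ S
  · rw [dif_pos h]
    constructor
    · intro hb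
      rw [← Option.some.inj hb]
      exact Classical.choose_spec h
    · intro hb
      exact congrArg some (hS (Classical.choose_spec h) hb)
  · rw [dif_neg h]
    exact ⟨fun hx => (nomatch hx), fun hx => absurd ⟨b, hx⟩ h⟩

lemma ofGraph_graphOf {α : Type*} (f : PMap α) : ofGraph (graphOf f) = f := by
  funext x
  rcases hx : f x with _ | a
  · rcases hy : ofGraph (graphOf f) x with _ | b
    · rfl
    · have : f x = some b := (mem_ofGraph (functional_graphOf f)).mp hy
      rw [hx] at this
      exact nomatch this
  · exact (mem_ofGraph (functional_graphOf f)).mpr (by exact hx)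

/-- Every partial homomorphism extends to a maximal one (Zorn). -/
lemma phom_exists_mph {f : PMap L} (hf : PHom L f) : ∃ g ∈ MPHset L, PExt g f := by
  classical
  set 𝒮 : Set (Set (L × Bool)) :=
    {S | Functional S ∧ PHom L (ofGraph S) ∧ graphOf f ⊆ S} with h𝒮
  have h0 : graphOf f ∈ 𝒮 := by
    refine ⟨functional_graphOf f, ?_, subset_rfl⟩
    rw [ofGraph_graphOf]; exact hf
  have hchain : ∀ c ⊆ 𝒮, IsChain (· ⊆ ·) c → c.Nonempty →
      ∃ ub ∈ 𝒮, ∀ s ∈ c, s ⊆ ub := by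
    intro c hc hch hne
    have hfunc : Functional (⋃₀ c) := by
      rintro x a b ⟨s, hs, has⟩ ⟨t, ht, hbt⟩
      rcases hch.total hs ht with h | h
      · exact (hc ht).1 (h has) hbt
      · exact (hc hs).1 has (h hbt)
    obtain ⟨s0, hs0⟩ := hne
    refine ⟨⋃₀ c, ⟨hfunc, ?_, fun p hp => ⟨s0, hs0, (hc hs0).2.2 hp⟩⟩,
      fun s hs => Set.subset_sUnion_of_mem hs⟩
    refine ⟨?_, ?_, ?_⟩
    · exact (mem_ofGraph hfunc).mpr ⟨s0, hs0, (hc hs0).2.2 (hf.1 : f ⊥ = some false)⟩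
    · exact (mem_ofGraph hfunc).mpr ⟨s0, hs0, (hc hs0).2.2 (hf.2.1 : f ⊤ = some true)⟩
    · intro a b x y ha hb
      obtain ⟨s, hs, has⟩ := (mem_ofGraph hfunc).mp ha
      obtain ⟨t, ht, hbt⟩ := (mem_ofGraph hfunc).mp hb
      have hcomb : ∃ u ∈ c, (a, x) ∈ u ∧ (b, y) ∈ u := by
        rcases hch.total hs ht with h | h
        · exact ⟨t, ht, h has, hbt⟩
        · exact ⟨s, hs, has, h hbt⟩
      obtain ⟨u, hu, hau, hbu⟩ := hcomb
      have hphu := (hc hu).2.1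
      have h1 := hphu.2.2 ((mem_ofGraph (hc hu).1).mpr hau) ((mem_ofGraph (hc hu).1).mpr hbu)
      constructor
      · exact (mem_ofGraph hfunc).mpr ⟨u, hu, (mem_ofGraph (hc hu).1).mp h1.1⟩
      · exact (mem_ofGraph hfunc).mpr ⟨u, hu, (mem_ofGraph (hc hu).1).mp h1.2⟩
  obtain ⟨M, hfM, hM⟩ := zorn_subset_nonempty 𝒮 hchain (graphOf f) h0
  have hMfunc : Functional M := hM.1.1
  refine ⟨ofGraph M, ⟨hM.1.2.1, ?_⟩, ?_⟩
  · intro g' hg' hext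
    have hg'mem : graphOf g' ∈ 𝒮 := by
      refine ⟨functional_graphOf g', ?_, ?_⟩
      · rw [ofGraph_graphOf]; exact hg'
      · intro p hp
        exact hext ((mem_ofGraph hMfunc).mpr (hfM hp))
    have hsub : M ⊆ graphOf g' := fun p hp => hext ((mem_ofGraph hMfunc).mpr hp)
    have heq : graphOf g' = M := Set.Subset.antisymm (hM.2 hg'mem hsub) hsub
    rw [← heq, ofGraph_graphOf]
  · intro x a hx
    exact (mem_ofGraph hMfunc).mpr (hfM (hx : f x = some a))

/-- The workhorse: any disjoint nonempty filter–ideal pair is separated by an MPH. -/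
lemma exists_mph_pair {F I : Set L} (hF : IsLatFilter L F) (hI : IsLatIdeal L I)
    (hd : Disjoint F I) :
    ∃ g ∈ MPHset L, (∀ x ∈ F, g x = some true) ∧ (∀ x ∈ I, g x = some false) := by
  obtain ⟨g, hg, hext⟩ := phom_exists_mph (sph_phom (pairMap_sph hF hI hd))
  exact ⟨g, hg, fun x hx => hext (pairMap_true.mpr hx),
    fun x hx => hext ((pairMap_false hd).mpr hx)⟩

end LatLemmas

open Classical in
/-- The map `Ψ` sending `φ ∈ MPE(D♭(L),2)` to a partial map on `SPH(L,2_B)`: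
`Ψ(φ)(f) = 1` if `(f,g) ∉ E` for every `g ∈ φ⁻¹(0)`; `Ψ(φ)(f) = 0` if every
`h ∈ SPH(L,2_B)` with `(h,g) ∉ E` for all `g ∈ φ⁻¹(0)` satisfies
`(h,f) ∉ E`; undefined otherwise. -/
noncomputable def Psi (L : Type*) [Lattice L] [BoundedOrder L]
    (φ : PMap (MPHsub L)) : PMap (SPHsub L) := fun f =>
  if ∀ g ∈ pre0 φ, ¬ ErelP f.1 g.1 then some true
  else if ∀ h : SPHsub L, (∀ g ∈ pre0 φ, ¬ ErelP h.1 g.1) → ¬ ErelP h.1 f.1 then some false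
  else none


section Main

variable {L : Type*} [Lattice L] [BoundedOrder L]

/-- The inclusion of `MPH(L,2_B)` into `SPH(L,2_B)`. -/
noncomputable def toS (g : MPHsub L) : SPHsub L := ⟨g.1, mph_sph g.2⟩

lemma psi_true_iff {φ : PMap (MPHsub L)} {f : SPHsub L} :
    Psi L φ f = some true ↔ ∀ g ∈ pre0 φ, ¬ ErelP f.1 g.1 := by
  unfold Psi
  by_cases h1 : ∀ g ∈ pre0 φ, ¬ ErelP f.1 g.1
  · rw [if_pos h1]
    exact ⟨fun _ => h1, fun _ => rfl⟩
  · rw [if_neg h1]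
    by_cases h2 : ∀ h : SPHsub L, (∀ g ∈ pre0 φ, ¬ ErelP h.1 g.1) → ¬ ErelP h.1 f.1
    · rw [if_pos h2]
      exact ⟨fun h => absurd (Option.some.inj h) (by decide), fun h => absurd h h1⟩
    · rw [if_neg h2]
      exact ⟨fun h => (nomatch h), fun h => absurd h h1⟩

lemma psi_false_iff {φ : PMap (MPHsub L)} {f : SPHsub L} :
    Psi L φ f = some false ↔
      ∀ h : SPHsub L, (∀ g ∈ pre0 φ, ¬ ErelP h.1 g.1) → ¬ ErelP h.1 f.1 := by
  unfold Psi
  by_cases h1 : ∀ g ∈ pre0 φ, ¬ ErelP f.1 g.1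
  · rw [if_pos h1]
    constructor
    · intro h; exact absurd (Option.some.inj h) (by decide)
    · intro h2; exact absurd (erelp_refl f.1) (h2 f h1)
  · rw [if_neg h1]
    by_cases h2 : ∀ h : SPHsub L, (∀ g ∈ pre0 φ, ¬ ErelP h.1 g.1) → ¬ ErelP h.1 f.1
    · rw [if_pos h2]
      exact ⟨fun _ => h2, fun _ => rfl⟩
    · rw [if_neg h2]
      exact ⟨fun h => (nomatch h), fun h => absurd h h2⟩

lemma psi_none_iff {φ : PMap (MPHsub L)} {f : SPHsub L} :
    Psi L φ f = none ↔
      (¬ ∀ g ∈ pre0 φ, ¬ ErelP f.1 g.1) ∧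
      (¬ ∀ h : SPHsub L, (∀ g ∈ pre0 φ, ¬ ErelP h.1 g.1) → ¬ ErelP h.1 f.1) := by
  rcases hx : Psi L φ f with _ | a
  · refine ⟨fun _ => ⟨?_, ?_⟩, fun _ => rfl⟩
    · intro h; rw [psi_true_iff.mpr h] at hx; exact nomatch hx
    · intro h; rw [psi_false_iff.mpr h] at hx; exact nomatch hx
  · constructor
    · intro h; exact nomatch h
    · rintro ⟨h1, h2⟩
      cases a with
      | true => exact absurd (psi_true_iff.mp hx) h1
      | false => exact absurd (psi_false_iff.mp hx) h2

lemma em_refl (g : MPHsub L) : EM L g g := erelp_refl g.1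

lemma es_refl (f : SPHsub L) : ES L f f := erelp_refl f.1

/-- Statement 16, part 1: `Ψ(φ)` is a maximal partial `E`-preserving map. -/
lemma psi_mem_mpe (φ : PMap (MPHsub L)) : Psi L φ ∈ MPE (ES L) := by
  rw [mem_mpe_iff]
  constructor
  · intro x y hxy a b hx hy
    cases a with
    | false => exact Bool.false_le b
    | true =>
      cases b with
      | true => exact le_refl _
      | false => exact absurd hxy ((psi_false_iff.mp hy) x (psi_true_iff.mp hx))
  · intro f hf
    obtain ⟨h1, h2⟩ := psi_none_iff.mp hf
    constructor
    · push_neg at h1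
      obtain ⟨g0, hg0, hEg0⟩ := h1
      refine ⟨toS g0, ?_, hEg0⟩
      exact psi_false_iff.mpr fun h hC1 => hC1 g0 hg0
    · push_neg at h2
      obtain ⟨h, hC1, hEhf⟩ := h2
      exact ⟨h, psi_true_iff.mpr hC1, hEhf⟩

lemma psi_recover {φ : PMap (MPHsub L)} (hφ : φ ∈ MPE (EM L)) (g : MPHsub L) :
    Psi L φ (toS g) = some true ↔ φ g = some true := by
  rw [psi_true_iff]
  constructor
  · intro hC1
    rcases hx : φ g with _ | a
    · obtain ⟨⟨g', hg', hE⟩, _⟩ := (mem_mpe_iff.mp hφ).2 g hx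
      exact absurd hE (hC1 g' hg')
    · cases a with
      | true => rfl
      | false => exact absurd (erelp_refl g.1) (hC1 g hx)
  · intro hg g' hg' hE
    have hE' : EM L g g' := hE
    exact absurd (hφ.1 hE' hg hg') (by decide)

/-- Statement 16, part 2: `Ψ` is an order-embedding. -/
lemma psi_order_iff {φ ψ : PMap (MPHsub L)} (hφ : φ ∈ MPE (EM L)) (hψ : ψ ∈ MPE (EM L)) :
    pre1 φ ⊆ pre1 ψ ↔ pre1 (Psi L φ) ⊆ pre1 (Psi L ψ) := by
  constructor
  · intro hsub
    have h0 : pre0 ψ ⊆ pre0 φ := by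
      rw [mpe_pre0_eq em_refl hφ, mpe_pre0_eq em_refl hψ]
      intro g hg h hh
      exact hg h (hsub hh)
    intro f hf
    have hC1 := psi_true_iff.mp (hf : Psi L φ f = some true)
    exact psi_true_iff.mpr fun g hg => hC1 g (h0 hg)
  · intro hsub g hg
    have h1 : Psi L φ (toS g) = some true := (psi_recover hφ g).mpr hg
    exact (psi_recover hψ g).mp (hsub h1)

/-- The key transfer lemma (0 side): if `η(h) = 0` and the MPH `g'` is `0`
on all of `h⁻¹(0)`, then `η(g') = 0`. -/
lemma eta_false {η : PMap (SPHsub L)} (hη : η ∈ MPE (ES L)) {h : SPHsub L}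
    (hh : η h = some false) {g' : PMap L} (hg' : g' ∈ MPHset L)
    (hsub : ∀ x, h.1 x = some false → g' x = some false) :
    η ⟨g', mph_sph hg'⟩ = some false := by
  set G : SPHsub L := ⟨g', mph_sph hg'⟩ with hGdef
  have hGh : ES L G h := by
    intro x a b hx hb
    cases a with
    | false => exact Bool.false_le b
    | true =>
      cases b with
      | true => exact le_refl _
      | false =>
        have h1 := hsub x hb
        have h2 : g' x = some true := hx
        rw [h2] at h1
        exact absurd (Option.some.inj h1) (by decide)
  rcases hG : η G with _ | a
  · exfalso
    obtain ⟨_, ⟨k, hk, hEk⟩⟩ := (mem_mpe_iff.mp hη).2 G hG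
    have hEkh : ES L k h := by
      intro x a b hx hb
      cases a with
      | false => exact Bool.false_le b
      | true =>
        cases b with
        | true => exact le_refl _
        | false => exact absurd (hEk hx (hsub x hb : g' x = some false)) (by decide)
    exact absurd (hη.1 hEkh hk hh) (by decide)
  · cases a with
    | false => rfl
    | true => exact absurd (hη.1 hGh hG hh) (by decide)

/-- The key transfer lemma (1 side). -/
lemma eta_true {η : PMap (SPHsub L)} (hη : η ∈ MPE (ES L)) {h : SPHsub L}
    (hh : η h = some true) {g' : PMap L} (hg' : g' ∈ MPHset L)
    (hsub : ∀ x, h.1 x = some true → g' x = some true) :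
    η ⟨g', mph_sph hg'⟩ = some true := by
  set G : SPHsub L := ⟨g', mph_sph hg'⟩ with hGdef
  have hhG : ES L h G := by
    intro x a b hx hb
    cases a with
    | false => exact Bool.false_le b
    | true =>
      have h1 := hsub x hx
      have h2 : g' x = some b := hb
      rw [h2] at h1
      exact le_of_eq (Option.some.inj h1).symm
  rcases hG : η G with _ | a
  · exfalso
    obtain ⟨⟨m, hm, hEm⟩, _⟩ := (mem_mpe_iff.mp hη).2 G hG
    have hEhm : ES L h m := by
      intro x a b hx hb
      cases a with
      | false => exact Bool.false_le b
      | true => exact hEm (hsub x hx : g' x = some true) hb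
    exact absurd (hη.1 hEhm hh hm) (by decide)
  · cases a with
    | true => rfl
    | false => exact absurd (hη.1 hhG hh hG) (by decide)

/-- Statement 16, part 4: `Ψ` is surjective onto `MPE(D̄♭(L), 2)`. -/
lemma psi_surj {η : PMap (SPHsub L)} (hη : η ∈ MPE (ES L)) :
    ∃ φ ∈ MPE (EM L), Psi L φ = η := by
  classical
  set φ : PMap (MPHsub L) := fun g => η (toS g) with hφdef
  have hφ : φ ∈ MPE (EM L) := by
    rw [mem_mpe_iff]
    constructor
    · intro g g' hE a b hx hy
      rw [hφdef] at hx hy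
      have hE' : ES L (toS g) (toS g') := hE
      exact hη.1 hE' hx hy
    · intro g hg
      rw [hφdef] at hg
      obtain ⟨⟨h, hh0, hEgh⟩, ⟨k, hk1, hEkg⟩⟩ := (mem_mpe_iff.mp hη).2 (toS g) hg
      constructor
      · -- 0 side
        have hd : Disjoint (pre1 g.1) (pre0 h.1) := by
          rw [Set.disjoint_left]
          intro x hx1 hx0
          exact absurd (hEgh hx1 hx0) (by decide)
        obtain ⟨g', hg'm, hg'F, hg'I⟩ := exists_mph_pair (mph_sph g.2).1 h.2.2.1 hd
        refine ⟨⟨g', hg'm⟩, ?_, ?_⟩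
        · show η (toS ⟨g', hg'm⟩) = some false
          exact eta_false hη hh0 hg'm (fun x hx => hg'I x hx)
        · intro x a b hx hb
          cases a with
          | false => exact Bool.false_le b
          | true =>
            have h1 := hg'F x hx
            have h2 : g' x = some b := hb
            rw [h2] at h1
            exact le_of_eq (Option.some.inj h1).symm
      · -- 1 side
        have hd : Disjoint (pre1 k.1) (pre0 g.1) := by
          rw [Set.disjoint_left]
          intro x hx1 hx0
          exact absurd (hEkg hx1 hx0) (by decide)
        obtain ⟨g', hg'm, hg'F, hg'I⟩ := exists_mph_pair k.2.1 (mph_sph g.2).2.1 hd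
        refine ⟨⟨g', hg'm⟩, ?_, ?_⟩
        · show η (toS ⟨g', hg'm⟩) = some true
          exact eta_true hη hk1 hg'm (fun x hx => hg'F x hx)
        · intro x a b hx hb
          cases a with
          | false => exact Bool.false_le b
          | true =>
            cases b with
            | true => exact le_refl _
            | false =>
              have h1 := hg'I x hb
              have h2 : g' x = some true := hx
              rw [h2] at h1
              exact absurd (Option.some.inj h1) (by decide)
  refine ⟨φ, hφ, ?_⟩
  apply mpe_eq_of_pre1 es_refl (psi_mem_mpe φ) hη
  ext f
  show Psi L φ f = some true ↔ η f = some true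
  rw [psi_true_iff]
  constructor
  · intro hC1
    rcases hf : η f with _ | a
    · exfalso
      obtain ⟨⟨h, hh0, hEfh⟩, _⟩ := (mem_mpe_iff.mp hη).2 f hf
      have hd : Disjoint (pre1 f.1) (pre0 h.1) := by
        rw [Set.disjoint_left]
        intro x hx1 hx0
        exact absurd (hEfh hx1 hx0) (by decide)
      obtain ⟨g', hg'm, hg'F, hg'I⟩ := exists_mph_pair f.2.1 h.2.2.1 hd
      refine hC1 ⟨g', hg'm⟩ ?_ ?_
      · show η (toS ⟨g', hg'm⟩) = some false
        exact eta_false hη hh0 hg'm (fun x hx => hg'I x hx)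
      · intro x a b hx hb
        cases a with
        | false => exact Bool.false_le b
        | true =>
          have h1 := hg'F x hx
          have h2 : g' x = some b := hb
          rw [h2] at h1
          exact le_of_eq (Option.some.inj h1).symm
    · cases a with
      | true => rfl
      | false =>
        exfalso
        obtain ⟨g', hg'm, hg'F, hg'I⟩ := exists_mph_pair f.2.1 f.2.2.1 f.2.2.2
        refine hC1 ⟨g', hg'm⟩ ?_ ?_
        · show η (toS ⟨g', hg'm⟩) = some false
          exact eta_false hη hf hg'm (fun x hx => hg'I x hx)
        · intro x a b hx hb
          cases a with
          | false => exact Bool.false_le b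
          | true =>
            have h1 := hg'F x hx
            have h2 : g' x = some b := hb
            rw [h2] at h1
            exact le_of_eq (Option.some.inj h1).symm
  · intro hf g hg0 hE
    rw [hφdef] at hg0
    have hE' : ES L f (toS g) := hE
    exact absurd (hη.1 hE' hf hg0) (by decide)

/-- Statement 16, part 5: `Ψ(e_a) = ē_a`. -/
lemma psi_eval (a : L) : Psi L (evalM L a) = evalS L a := by
  funext f
  show Psi L (evalM L a) f = f.1 a
  rcases hfa : f.1 a with _ | b
  · rw [psi_none_iff]
    constructor
    · intro hC1
      have hna : a ∉ pre1 f.1 := fun hha => by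
        rw [(hha : f.1 a = some true)] at hfa; exact nomatch hfa
      have hI : IsLatIdeal L {x | x ≤ a} :=
        ⟨⟨a, le_rfl⟩, fun x y hx hyx => hyx.trans hx, fun x y hx hy => sup_le hx hy⟩
      have hd : Disjoint (pre1 f.1) {x | x ≤ a} := by
        rw [Set.disjoint_left]
        intro x hx1 hx0
        exact hna (f.2.1.2.1 hx1 hx0)
      obtain ⟨g', hg'm, hg'F, hg'I⟩ := exists_mph_pair f.2.1 hI hd
      refine hC1 ⟨g', hg'm⟩ (hg'I a le_rfl : evalM L a ⟨g', hg'm⟩ = some false) ?_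
      intro x a' b hx hb
      cases a' with
      | false => exact Bool.false_le b
      | true =>
        have h1 := hg'F x hx
        have h2 : g' x = some b := hb
        rw [h2] at h1
        exact le_of_eq (Option.some.inj h1).symm
    · intro hC2
      have hFl : IsLatFilter L {x | a ≤ x} :=
        ⟨⟨a, le_rfl⟩, fun x y hx hxy => hx.trans hxy, fun x y hx hy => le_inf hx hy⟩
      have hd : Disjoint {x | a ≤ x} (pre0 f.1) := by
        rw [Set.disjoint_left]
        intro x hx1 hx0
        have : a ∈ pre0 f.1 := f.2.2.1.2.1 hx0 hx1
        rw [(this : f.1 a = some false)] at hfa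
        exact nomatch hfa
      have hsph := pairMap_sph hFl f.2.2.1 hd
      refine hC2 ⟨pairMap _ _, hsph⟩ ?_ ?_
      · intro g hg0 hE
        have h1 : pairMap {x | a ≤ x} (pre0 f.1) a = some true := pairMap_true.mpr le_rfl
        exact absurd (hE h1 (hg0 : g.1 a = some false)) (by decide)
      · intro x a' b hx hb
        cases a' with
        | false => exact Bool.false_le b
        | true =>
          cases b with
          | true => exact le_refl _
          | false =>
            exfalso
            have hax : a ≤ x := pairMap_true.mp hx
            have : a ∈ pre0 f.1 := f.2.2.1.2.1 (hb : x ∈ pre0 f.1) hax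
            rw [(this : f.1 a = some false)] at hfa
            exact nomatch hfa
  · cases b with
    | true =>
      refine psi_true_iff.mpr fun g hg hE => ?_
      exact absurd (hE hfa (hg : g.1 a = some false)) (by decide)
    | false =>
      refine psi_false_iff.mpr fun h hC1 hEhf => ?_
      have hna : a ∉ pre1 h.1 := fun hha =>
        absurd (hEhf (hha : h.1 a = some true) hfa) (by decide)
      have hI : IsLatIdeal L {x | x ≤ a} :=
        ⟨⟨a, le_rfl⟩, fun x y hx hyx => hyx.trans hx, fun x y hx hy => sup_le hx hy⟩
      have hd : Disjoint (pre1 h.1) {x | x ≤ a} := by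
        rw [Set.disjoint_left]
        intro x hx1 hx0
        exact hna (h.2.1.2.1 hx1 hx0)
      obtain ⟨g', hg'm, hg'F, hg'I⟩ := exists_mph_pair h.2.1 hI hd
      refine hC1 ⟨g', hg'm⟩ (hg'I a le_rfl : evalM L a ⟨g', hg'm⟩ = some false) ?_
      intro x a' b hx hb
      cases a' with
      | false => exact Bool.false_le b
      | true =>
        have h1 := hg'F x hx
        have h2 : g' x = some b := hb
        rw [h2] at h1
        exact le_of_eq (Option.some.inj h1).symm

end Main

/-- Let `L` be a bounded lattice, `X = D♭(L)` and
`Y = D̄♭(L)`. For every `φ ∈ MPE(X,2)` the partial map `Ψ(φ)` belongs to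
`MPE(Y,2)`, and `Ψ : MPE(X,2) → MPE(Y,2)` is an order-isomorphism for the
orders `φ ≤ ψ ↔ φ⁻¹(1) ⊆ ψ⁻¹(1)`; moreover `Ψ(e_a) = ē_a` for all `a ∈ L`. -/
theorem stmt_16 (L : Type*) [Lattice L] [BoundedOrder L] :
    (∀ φ ∈ MPE (EM L), Psi L φ ∈ MPE (ES L)) ∧
    (∀ φ ∈ MPE (EM L), ∀ ψ ∈ MPE (EM L),
      (pre1 φ ⊆ pre1 ψ ↔ pre1 (Psi L φ) ⊆ pre1 (Psi L ψ))) ∧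
    Set.InjOn (Psi L) (MPE (EM L)) ∧
    (∀ η ∈ MPE (ES L), ∃ φ ∈ MPE (EM L), Psi L φ = η) ∧
    (∀ a : L, Psi L (evalM L a) = evalS L a) := by
  refine ⟨fun φ _ => psi_mem_mpe φ, fun φ hφ ψ hψ => psi_order_iff hφ hψ, ?_, fun η hη => psi_surj hη, psi_eval⟩
  intro φ hφ ψ hψ heq
  apply mpe_eq_of_pre1 em_refl hφ hψ
  have h1 : pre1 (Psi L φ) = pre1 (Psi L ψ) := by rw [heq]
  exact Set.Subset.antisymm ((psi_order_iff hφ hψ).mpr h1.subset)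
    ((psi_order_iff hψ hφ).mpr h1.symm.subset)

end CanExt
end

section
/- Let L be a bounded lattice, Y = D̄♭(L) = (SPH(L,2_B), E), and let φ be a partial map from SPH(L,2_B) to {0,1}. Then φ is a maximal partial E-preserving map (an element of MPE(Y,2)) if and only if φ⁻¹(1) = ℓ(φ⁻¹(0)) and φ⁻¹(0) = r(φ⁻¹(1)). -/
namespace CanExt

open Classical

/-- `ℓ(A) = {f ∈ SPH(L,2_B) : f ≰₁ g for all g ∈ A}`. -/
def ellS (L : Type*) [Lattice L] [BoundedOrder L]
    (A : Set (SPHsub L)) : Set (SPHsub L) := {f | ∀ g ∈ A, ¬ le1 f.1 g.1}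

/-- `r(A) = {f ∈ SPH(L,2_B) : f ≰₂ g for all g ∈ A}`. -/
def rS (L : Type*) [Lattice L] [BoundedOrder L]
    (A : Set (SPHsub L)) : Set (SPHsub L) := {f | ∀ g ∈ A, ¬ le2 f.1 g.1}

section Aux

variable {L : Type*} [Lattice L] [BoundedOrder L]

lemma erelP_refl' (f : PMap L) : ErelP f f := by
  intro x a b hfa hfb
  rw [hfa] at hfb
  cases hfb
  exact le_refl _

lemma not_erelP_iff {f g : PMap L} :
    ¬ ErelP f g ↔ ∃ x, f x = some true ∧ g x = some false := by
  constructor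
  · intro h
    by_contra hc
    push_neg at hc
    apply h
    intro x a b hfa hgb
    cases a with
    | false => exact Bool.false_le b
    | true =>
      cases b with
      | false => exact absurd hgb (hc x hfa)
      | true => exact le_refl _
  · rintro ⟨x, h1, h0⟩ hE
    exact absurd (hE h1 h0) (by decide)

lemma erelP_of_le1 {f g : PMap L} (hg : g ∈ SPHset L) (h : le1 f g) : ErelP f g := by
  intro x a b hfa hgb
  cases a with
  | false => exact Bool.false_le b
  | true =>
    have hx : x ∈ pre1 g := h hfa
    have : g x = some true := hx
    rw [hgb] at this
    cases this
    exact le_refl _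

lemma erelP_of_le2 {f g : PMap L} (hf : f ∈ SPHset L) (h : le2 g f) : ErelP f g := by
  intro x a b hfa hgb
  cases b with
  | true => exact Bool.le_true a
  | false =>
    have hx : x ∈ pre0 f := h hgb
    have : f x = some false := hx
    rw [hfa] at this
    cases this
    exact le_refl _

open Classical in
/-- Build a partial map from a filter `F` and an ideal `I`. -/
noncomputable def mkSPH (F I : Set L) : PMap L :=
  fun x => if x ∈ F then some true else if x ∈ I then some false else none

lemma mkSPH_pre1 (F I : Set L) : pre1 (mkSPH F I) = F := by
  ext x
  simp only [pre1, mkSPH, Set.mem_setOf_eq]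
  split_ifs with h1 h2 <;> simp_all

lemma mkSPH_pre0 {F I : Set L} (hd : Disjoint F I) : pre0 (mkSPH F I) = I := by
  ext x
  simp only [pre0, mkSPH, Set.mem_setOf_eq]
  split_ifs with h1 h2
  · exact iff_of_false (by simp) (fun h => Set.disjoint_left.mp hd h1 h)
  · exact iff_of_true rfl h2
  · exact iff_of_false (by simp) h2

lemma mkSPH_mem {F I : Set L} (hF : IsLatFilter L F) (hI : IsLatIdeal L I)
    (hd : Disjoint F I) : mkSPH F I ∈ SPHset L := by
  refine ⟨?_, ?_, ?_⟩
  · rw [mkSPH_pre1]; exact hF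
  · rw [mkSPH_pre0 hd]; exact hI
  · rw [mkSPH_pre1, mkSPH_pre0 hd]; exact hd

lemma mkSPH_disjoint {f g : PMap L} (hf : f ∈ SPHset L) (hg : g ∈ SPHset L)
    (hE : ErelP f g) : Disjoint (pre1 f) (pre0 g) := by
  rw [Set.disjoint_left]
  intro x h1 h0
  exact absurd (hE h1 h0) (by decide)

variable {φ : PMap (SPHsub L)}

/-- If `φ` is maximal and `x ∉ dom φ`, then `x` cannot be extended by `1`,
so there is `g ∈ φ⁻¹(0)` with `(x,g) ∈ E`. -/
lemma ext_true_s18 (hφ : φ ∈ MPE (ES L)) (x : SPHsub L) (hx : φ x = none) :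
    ∃ g, φ g = some false ∧ ErelP x.1 g.1 := by
  by_contra hc
  push_neg at hc
  set ψ : PMap (SPHsub L) := fun y => if y = x then some true else φ y with hψdef
  have hEP : EPres (ES L) ψ := by
    intro p q hpq a b hp hq
    by_cases hpx : p = x
    · subst hpx
      simp only [ψ, if_pos rfl] at hp
      cases hp
      by_cases hqx : q = p
      · subst hqx
        simp only [ψ, if_pos rfl] at hq
        cases hq; exact le_refl _
      · simp only [ψ, if_neg hqx] at hq
        cases b with
        | true => exact le_refl _
        | false => exact absurd hpq (hc q hq)
    · simp only [ψ, if_neg hpx] at hp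
      by_cases hqx : q = x
      · subst hqx
        simp only [ψ, if_pos rfl] at hq
        cases hq; exact Bool.le_true a
      · simp only [ψ, if_neg hqx] at hq
        exact hφ.1 hpq hp hq
  have hPE : PExt ψ φ := by
    intro y a hy
    by_cases hyx : y = x
    · subst hyx; rw [hx] at hy; cases hy
    · simp only [ψ, if_neg hyx]; exact hy
  have := hφ.2 ψ hEP hPE
  have hx' : ψ x = φ x := congrFun this x
  simp only [ψ, if_pos rfl, hx] at hx'
  exact Option.some_ne_none _ hx'

/-- If `φ` is maximal and `x ∉ dom φ`, then `x` cannot be extended by `0`,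
so there is `f ∈ φ⁻¹(1)` with `(f,x) ∈ E`. -/
lemma ext_false_s18 (hφ : φ ∈ MPE (ES L)) (x : SPHsub L) (hx : φ x = none) :
    ∃ f, φ f = some true ∧ ErelP f.1 x.1 := by
  by_contra hc
  push_neg at hc
  set ψ : PMap (SPHsub L) := fun y => if y = x then some false else φ y with hψdef
  have hEP : EPres (ES L) ψ := by
    intro p q hpq a b hp hq
    by_cases hqx : q = x
    · subst hqx
      simp only [ψ, if_pos rfl] at hq
      cases hq
      by_cases hpx : p = q
      · subst hpx
        simp only [ψ, if_pos rfl] at hp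
        cases hp; exact le_refl _
      · simp only [ψ, if_neg hpx] at hp
        cases a with
        | false => exact le_refl _
        | true => exact absurd hpq (hc p hp)
    · simp only [ψ, if_neg hqx] at hq
      by_cases hpx : p = x
      · subst hpx
        simp only [ψ, if_pos rfl] at hp
        cases hp; exact Bool.false_le b
      · simp only [ψ, if_neg hpx] at hp
        exact hφ.1 hpq hp hq
  have hPE : PExt ψ φ := by
    intro y a hy
    by_cases hyx : y = x
    · subst hyx; rw [hx] at hy; cases hy
    · simp only [ψ, if_neg hyx]; exact hy
  have := hφ.2 ψ hEP hPE
  have hx' : ψ x = φ x := congrFun this x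
  simp only [ψ, if_pos rfl, hx] at hx'
  exact Option.some_ne_none _ hx'

/-- Basic consequence of `E`-preservation: no edge from `φ⁻¹(1)` into `φ⁻¹(0)`. -/
lemma no_edge (hφ : φ ∈ MPE (ES L)) {f g : SPHsub L}
    (hf : φ f = some true) (hg : φ g = some false) : ¬ ErelP f.1 g.1 :=
  fun hE => absurd (hφ.1 hE hf hg) (by decide)

end Aux

/-- Let `L` be a bounded lattice, `Y = D̄♭(L)` and `φ` a
partial map from `SPH(L,2_B)` to `{0,1}`. Then `φ ∈ MPE(Y,2)` if and only if
`φ⁻¹(1) = ℓ(φ⁻¹(0))` and `φ⁻¹(0) = r(φ⁻¹(1))`. -/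
theorem stmt_18 (L : Type*) [Lattice L] [BoundedOrder L] (φ : PMap (SPHsub L)) :
    φ ∈ MPE (ES L) ↔
      (pre1 φ = ellS L (pre0 φ) ∧ pre0 φ = rS L (pre1 φ)) := by
  constructor
  · intro hφ
    constructor
    · ext f
      constructor
      · -- pre1 φ ⊆ ellS (pre0 φ)
        intro hf g hg hle
        exact no_edge hφ hf hg (erelP_of_le1 g.2 hle)
      · -- ellS (pre0 φ) ⊆ pre1 φ
        intro hf
        -- first: f ∈ ℓ'(V), i.e. no edge from f into pre0 φ
        have hl : ∀ g : SPHsub L, φ g = some false → ¬ ErelP f.1 g.1 := by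
          intro g hg hE
          have hd := mkSPH_disjoint f.2 g.2 hE
          have hmem := mkSPH_mem f.2.1 g.2.2.1 hd
          set h : SPHsub L := ⟨mkSPH (pre1 f.1) (pre0 g.1), hmem⟩ with hh
          have hpre1 : pre1 h.1 = pre1 f.1 := mkSPH_pre1 _ _
          have hpre0 : pre0 h.1 = pre0 g.1 := mkSPH_pre0 hd
          -- show φ h = some false
          have hhV : φ h = some false := by
            rcases hhv : φ h with _ | (_ | _)
            · -- none : use ext_false
              rcases ext_false_s18 hφ h hhv with ⟨u, hu, hEu⟩
              rcases not_erelP_iff.mp (no_edge hφ hu hg) with ⟨x, hx1, hx0⟩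
              have hx0' : x ∈ pre0 h.1 := by rw [hpre0]; exact hx0
              exact absurd (hEu hx1 hx0') (by decide)
            · -- some false : done
              rfl
            · -- some true : h ∈ pre1 φ, but le2 g h gives an edge h → g
              have : ErelP h.1 g.1 :=
                erelP_of_le2 h.2 (by rw [le2, hpre0])
              exact absurd this (no_edge hφ hhv hg)
          have : le1 f.1 h.1 := by rw [le1, hpre1]
          exact hf h hhV this
        -- now conclude f ∈ pre1 φ
        rcases hfv : φ f with _ | (_ | _)
        · rcases ext_true_s18 hφ f hfv with ⟨g, hg, hEg⟩
          exact absurd hEg (hl g hg)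
        · exact absurd (erelP_refl' f.1) (hl f hfv)
        · exact hfv
    · ext g
      constructor
      · -- pre0 φ ⊆ rS (pre1 φ)
        intro hg f hf hle
        exact no_edge hφ hf hg (erelP_of_le2 f.2 hle)
      · -- rS (pre1 φ) ⊆ pre0 φ
        intro hg
        have hr : ∀ f : SPHsub L, φ f = some true → ¬ ErelP f.1 g.1 := by
          intro f hf hE
          have hd := mkSPH_disjoint f.2 g.2 hE
          have hmem := mkSPH_mem f.2.1 g.2.2.1 hd
          set h : SPHsub L := ⟨mkSPH (pre1 f.1) (pre0 g.1), hmem⟩ with hh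
          have hpre1 : pre1 h.1 = pre1 f.1 := mkSPH_pre1 _ _
          have hpre0 : pre0 h.1 = pre0 g.1 := mkSPH_pre0 hd
          have hhU : φ h = some true := by
            rcases hhv : φ h with _ | (_ | _)
            · rcases ext_true_s18 hφ h hhv with ⟨v, hv, hEv⟩
              rcases not_erelP_iff.mp (no_edge hφ hf hv) with ⟨x, hx1, hx0⟩
              have hx1' : x ∈ pre1 h.1 := by rw [hpre1]; exact hx1
              exact absurd (hEv hx1' hx0) (by decide)
            · have : ErelP f.1 h.1 :=
                erelP_of_le1 h.2 (by rw [le1, hpre1])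
              exact absurd this (no_edge hφ hf hhv)
            · rfl
          have : le2 g.1 h.1 := by rw [le2, hpre0]
          exact hg h hhU this
        rcases hgv : φ g with _ | (_ | _)
        · rcases ext_false_s18 hφ g hgv with ⟨f, hf, hEf⟩
          exact absurd hEf (hr f hf)
        · exact hgv
        · exact absurd (erelP_refl' g.1) (hr g hgv)
  · rintro ⟨hU, hV⟩
    constructor
    · -- E-preservation
      intro p q hpq a b hp hq
      cases a with
      | false => exact Bool.false_le b
      | true =>
        cases b with
        | true => exact le_refl _
        | false =>
          exfalso
          have hpq' : ErelP p.1 q.1 := hpq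
          have hd := mkSPH_disjoint p.2 q.2 hpq'
          have hmem := mkSPH_mem p.2.1 q.2.2.1 hd
          set h : SPHsub L := ⟨mkSPH (pre1 p.1) (pre0 q.1), hmem⟩ with hh
          have hpre1 : pre1 h.1 = pre1 p.1 := mkSPH_pre1 _ _
          have hpre0 : pre0 h.1 = pre0 q.1 := mkSPH_pre0 hd
          have hpU : p ∈ ellS L (pre0 φ) := by rw [← hU]; exact hp
          have hqV : q ∈ rS L (pre1 φ) := by rw [← hV]; exact hq
          have hhU : h ∈ pre1 φ := by
            rw [hU]
            intro g hg hle
            exact hpU g hg (by rw [le1, ← hpre1]; exact hle)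
          have hhV : h ∈ pre0 φ := by
            rw [hV]
            intro f hf hle
            exact hqV f hf (by rw [le2, ← hpre0]; exact hle)
          have h1 : φ h = some true := hhU
          have h0 : φ h = some false := hhV
          rw [h1] at h0
          cases h0
    · -- maximality
      intro ψ hψ hext
      funext x
      rcases hx : φ x with _ | a
      · rcases hx' : ψ x with _ | (_ | _)
        · rfl
        · -- ψ x = some false : x ∉ rS (pre1 φ)
          exfalso
          have hxV : x ∉ pre0 φ := by rw [pre0, Set.mem_setOf_eq, hx]; simp
          rw [hV, rS, Set.mem_setOf_eq] at hxV
          push_neg at hxV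
          rcases hxV with ⟨f, hf, hle⟩
          have hE : ErelP f.1 x.1 := erelP_of_le2 f.2 hle
          exact absurd (hψ hE (hext hf) hx') (by decide)
        · exfalso
          have hxU : x ∉ pre1 φ := by rw [pre1, Set.mem_setOf_eq, hx]; simp
          rw [hU, ellS, Set.mem_setOf_eq] at hxU
          push_neg at hxU
          rcases hxU with ⟨g, hg, hle⟩
          have hE : ErelP x.1 g.1 := erelP_of_le1 g.2 hle
          exact absurd (hψ hE hx' (hext hg)) (by decide)
      · exact hext hx

end CanExt
end
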